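/- For any two genomes A and B over the same finite set of N genes, C + I/2 ≤ N, where C is the number of cycle components and I is the number of odd-length path components of the adjacency graph AG(A,B); moreover equality holds if and only if A = B. -/
import Mathlib


/-! Basic definitions for genomes and the DCJ model, following
Bergeron–Mixtacki–Stoye and Yancopoulos et al. -/

/-- An *extremity* of a gene: the gene together with a Boolean distinguishing
its head (`true`) from its tail (`false`).  A gene set of cardinality `N`
has `2 * N` extremities. -/
abbrev Extremity (G : Type*) := G × Bool

/-- A *genome* over the gene set `G` is a partition of the set of extremities
into blocks of size two (*adjacencies*) and blocks of size one (*telomeres*).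
Such a partition is faithfully encoded by the involution sending each
extremity to the other element of its block (to itself for a telomere). -/
structure Genome (G : Type*) where
  f : Extremity G → Extremity G
  invol : Function.Involutive f

namespace Genome

variable {G : Type*}

/-- The block of the extremity `x` in the genome `A`: either the adjacency
`{x, A.f x}` (when `A.f x ≠ x`) or the telomere `{x}` (when `A.f x = x`). -/
def block (A : Genome G) (x : Extremity G) : Set (Extremity G) := {x, A.f x}

/-- The blocks (adjacencies and telomeres) of a genome. -/
def blocks (A : Genome G) : Set (Set (Extremity G)) := {s | ∃ x, s = A.block x}

end Genome

section AdjacencyGraph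

variable {G : Type*}

/-- The edges of the adjacency graph `AG(A,B)` are indexed by the extremities:
the edge of the extremity `x` joins the block of `x` in `A` with the block of
`x` in `B`.  Two edges `x`, `y` are related by `agStep A B` when they share an
endpoint, i.e. when `y` lies in the `A`-block or in the `B`-block of `x`. -/
def agStep (A B : Genome G) (x y : Extremity G) : Prop := A.f x = y ∨ B.f x = y

/-- The setoid identifying edges of `AG(A,B)` that lie in the same connected
component. -/
def agSetoid (A B : Genome G) : Setoid (Extremity G) :=
  ⟨Relation.EqvGen (agStep A B), Relation.EqvGen.is_equivalence _⟩

/-- The set of edges of the connected component `q` of `AG(A,B)`. -/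
def componentEdges (A B : Genome G) (q : Quotient (agSetoid A B)) :
    Set (Extremity G) :=
  {x | Quotient.mk (agSetoid A B) x = q}

/-- `IsAltPath fA fB n K` : the edge set `K` consists of `n + 1` distinct
edges `e 0, …, e n` forming a simple path: consecutive edges share a block,
alternately a block of the first genome (encoded by the involution `fA`) and
of the second one (`fB`), starting with `fA`; the two free gene ends of the
terminal edges are telomeres (of the second genome at `e 0`, and of the
appropriate genome at `e n` according to parity). -/
def IsAltPath (fA fB : Extremity G → Extremity G) (n : ℕ)
    (K : Set (Extremity G)) : Prop :=
  ∃ e : Fin (n + 1) → Extremity G,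
    Function.Injective e ∧ Set.range e = K ∧
    (∀ i : ℕ, ∀ h : i + 1 < n + 1,
      e ⟨i + 1, h⟩ = (if Even i then fA else fB) (e ⟨i, by omega⟩)) ∧
    fB (e 0) = e 0 ∧
    (if Odd n then fB else fA) (e ⟨n, by omega⟩) = e ⟨n, by omega⟩

/-- `IsAltCycle fA fB K` : the edge set `K` consists of `2 * n` distinct edges
(for some `n > 0`) arranged in a cycle, consecutive edges sharing a block,
alternately a block of the first genome (`fA`) and of the second (`fB`). -/
def IsAltCycle (fA fB : Extremity G → Extremity G) (K : Set (Extremity G)) :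
    Prop :=
  ∃ n : ℕ, 0 < n ∧ ∃ e : ZMod (2 * n) → Extremity G,
    Function.Injective e ∧ Set.range e = K ∧
    ∀ i : ZMod (2 * n), e (i + 1) = (if Even i.val then fA else fB) (e i)

/-- The component `q` of `AG(A,B)` is a cycle. -/
def IsCycleComponent (A B : Genome G) (q : Quotient (agSetoid A B)) : Prop :=
  IsAltCycle A.f B.f (componentEdges A B q) ∨
    IsAltCycle B.f A.f (componentEdges A B q)

/-- The component `q` of `AG(A,B)` is a simple path (with some number
`n + 1 ≥ 1` of edges). -/
def IsPathComponent (A B : Genome G) (q : Quotient (agSetoid A B)) : Prop :=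
  ∃ n : ℕ,
    IsAltPath A.f B.f n (componentEdges A B q) ∨
      IsAltPath B.f A.f n (componentEdges A B q)

/-- The component `q` of `AG(A,B)` is a simple path with an odd number of
edges (`n + 1` edges with `n` even). -/
def IsOddPathComponent (A B : Genome G) (q : Quotient (agSetoid A B)) : Prop :=
  ∃ n : ℕ, Even n ∧
    (IsAltPath A.f B.f n (componentEdges A B q) ∨
      IsAltPath B.f A.f n (componentEdges A B q))

/-- `C`, the number of cycle components of `AG(A,B)`. -/
noncomputable def numCycles (A B : Genome G) : ℕ :=
  Nat.card {q : Quotient (agSetoid A B) // IsCycleComponent A B q}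

/-- `I`, the number of path components of `AG(A,B)` with an odd number of
edges. -/
noncomputable def numOddPaths (A B : Genome G) : ℕ :=
  Nat.card {q : Quotient (agSetoid A B) // IsOddPathComponent A B q}

end AdjacencyGraph

section DCJ

variable {G : Type*} [DecidableEq G]

/-- Rewiring of the pairing `f` that matches `p` with `r` and `q` with `s`,
leaving everything else unchanged. -/
def rewire (f : Extremity G → Extremity G) (p q r s : Extremity G) :
    Extremity G → Extremity G := fun x =>
  if x = p then r else if x = r then p else if x = q then s else
    if x = s then q else f x

/-- A single DCJ operation transforming the genome `A` into the genome `A'`: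
* two adjacencies `{p,q}`, `{r,s}` are replaced by `{p,r}`, `{q,s}` or by
  `{p,s}`, `{q,r}`;
* an adjacency `{p,q}` and a telomere `{r}` are replaced by `{p,r}`, `{q}` or
  by `{p}`, `{q,r}`;
* an adjacency `{p,q}` is replaced by the two telomeres `{p}`, `{q}`;
* two telomeres `{p}`, `{q}` are replaced by the adjacency `{p,q}`.
All other blocks of `A` are unchanged. -/
def DCJStep (A A' : Genome G) : Prop :=
  (∃ p q r s : Extremity G, A.f p = q ∧ p ≠ q ∧ A.f r = s ∧ r ≠ s ∧
      p ≠ r ∧ p ≠ s ∧ q ≠ r ∧ q ≠ s ∧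
      (A'.f = rewire A.f p q r s ∨ A'.f = rewire A.f p q s r)) ∨
  (∃ p q r : Extremity G, A.f p = q ∧ p ≠ q ∧ A.f r = r ∧ r ≠ p ∧ r ≠ q ∧
      (A'.f = rewire A.f p q r q ∨ A'.f = rewire A.f q p r p)) ∨
  (∃ p q : Extremity G, A.f p = q ∧ p ≠ q ∧ A'.f = rewire A.f p q p q) ∨
  (∃ p q : Extremity G, A.f p = p ∧ A.f q = q ∧ p ≠ q ∧
      A'.f = rewire A.f p q q p)

/-- The DCJ distance between two genomes: the least number of DCJ operations
transforming `A` into `B`. -/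
noncomputable def dcjDist (A B : Genome G) : ℕ :=
  sInf {n : ℕ | ∃ g : ℕ → Genome G, g 0 = A ∧ g n = B ∧
    ∀ i < n, DCJStep (g i) (g (i + 1))}

end DCJ


section Aux

variable {G : Type*}

private lemma altPath_card {fA fB : Extremity G → Extremity G} {n : ℕ}
    {K : Set (Extremity G)} (h : IsAltPath fA fB n K) : Nat.card K = n + 1 := by
  obtain ⟨e, he, hr, -⟩ := h
  rw [← hr, Nat.card_range_of_injective he, Nat.card_eq_fintype_card, Fintype.card_fin]

private lemma altCycle_card {fA fB : Extremity G → Extremity G}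
    {K : Set (Extremity G)} (h : IsAltCycle fA fB K) :
    ∃ n, 0 < n ∧ Nat.card K = 2 * n := by
  obtain ⟨n, hn, e, he, hr, -⟩ := h
  exact ⟨n, hn, by rw [← hr, Nat.card_range_of_injective he, Nat.card_zmod]⟩

private lemma altPath_card_one {fA fB : Extremity G → Extremity G} {n : ℕ}
    {K : Set (Extremity G)} {x : Extremity G} (h : IsAltPath fA fB n K) (hx : x ∈ K)
    (hc : Nat.card K = 1) : fA x = x ∧ fB x = x := by
  have hn : n = 0 := by have := altPath_card h; omega
  subst hn
  obtain ⟨e, he, hr, -, hB, hlast⟩ := h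
  rw [← hr] at hx
  obtain ⟨i, rfl⟩ := hx
  have hi : i = 0 := Fin.ext (by omega)
  subst hi
  simp only [Nat.odd_iff, Nat.even_iff] at hlast
  norm_num at hlast
  exact ⟨hlast, hB⟩

private lemma altCycle_card_two {fA fB : Extremity G → Extremity G}
    {K : Set (Extremity G)} {x : Extremity G}
    (hA : Function.Involutive fA) (hB : Function.Involutive fB)
    (h : IsAltCycle fA fB K) (hx : x ∈ K) (hc : Nat.card K = 2) : fA x = fB x := by
  obtain ⟨n, hn, e, he, hr, hstep⟩ := h
  have hcard : Nat.card K = 2 * n := by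
    rw [← hr, Nat.card_range_of_injective he, Nat.card_zmod]
  have hn1 : n = 1 := by omega
  subst hn1
  have hv0 : (0 : ZMod (2 * 1)).val = 0 := by decide
  have hv1 : (1 : ZMod (2 * 1)).val = 1 := by decide
  have h11 : (1 + 1 : ZMod (2 * 1)) = 0 := by decide
  have hs0 := hstep 0
  have hs1 := hstep 1
  rw [hv0] at hs0; rw [hv1, h11] at hs1
  norm_num at hs0 hs1
  rw [← hr] at hx
  obtain ⟨i, rfl⟩ := hx
  have h2 : ∀ k : ZMod (2 * 1), k = 0 ∨ k = 1 := by decide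
  have key0 : fA (e 0) = fB (e 0) := by
    rw [← hs0, hs1, hB]
  have key1 : fA (e 1) = fB (e 1) := by
    rw [hs0] at hs1 ⊢
    rw [hA]
    exact hs1
  rcases h2 i with rfl | rfl
  · exact key0
  · exact key1

private lemma altPath_singleton {fA fB : Extremity G → Extremity G} {x : Extremity G}
    (hA : fA x = x) (hB : fB x = x) : IsAltPath fA fB 0 {x} := by
  refine ⟨fun _ => x, fun i j _ => Fin.ext (by omega), by simp, ?_, hB, by simp [hA]⟩
  intro i h; omega

private lemma altCycle_pair {fA fB : Extremity G → Extremity G} {x : Extremity G}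
    (hne : fA x ≠ x) (hAB : fB (fA x) = x) : IsAltCycle fA fB {x, fA x} := by
  have h2 : ∀ k : ZMod (2 * 1), k = 0 ∨ k = 1 := by decide
  have h10 : (1 : ZMod (2 * 1)) ≠ 0 := by decide
  refine ⟨1, one_pos, fun i => if i = 0 then x else fA x, ?_, ?_, ?_⟩
  · intro i j hij
    rcases h2 i with rfl | rfl <;> rcases h2 j with rfl | rfl <;>
        simp only [if_pos rfl, if_neg h10] at hij
    · rfl
    · exact absurd hij.symm hne
    · exact absurd hij hne
    · rfl
  · ext y
    constructor
    · rintro ⟨i, rfl⟩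
      rcases h2 i with rfl | rfl
      · simp
      · simp [h10]
    · rintro (rfl | rfl)
      · exact ⟨0, by simp⟩
      · exact ⟨1, by simp [h10]⟩
  · intro i
    rcases h2 i with rfl | rfl
    · have hv : (0 : ZMod (2 * 1)).val = 0 := by decide
      simp [h10, hv]
    · have h11 : (1 + 1 : ZMod (2 * 1)) = 0 := by decide
      have hv : (1 : ZMod (2 * 1)).val = 1 := by decide
      rw [h11]
      simp [h10, hv, hAB, Nat.even_iff]

private lemma eqvGen_self (A : Genome G) {x y : Extremity G}
    (h : Relation.EqvGen (agStep A A) x y) : y = x ∨ y = A.f x := by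
  induction h with
  | rel a b hab => rcases hab with h | h <;> exact Or.inr h.symm
  | refl a => exact Or.inl rfl
  | symm a b _ ih =>
      rcases ih with rfl | rfl
      · exact Or.inl rfl
      · exact Or.inr (A.invol a).symm
  | trans a b c _ _ ih1 ih2 =>
      rcases ih2 with rfl | rfl
      · exact ih1
      · rcases ih1 with rfl | rfl
        · exact Or.inr rfl
        · exact Or.inl (A.invol a)

private lemma componentEdges_self (A : Genome G) (x : Extremity G) :
    componentEdges A A (Quotient.mk _ x) = {x, A.f x} := by
  ext y
  simp only [componentEdges, Set.mem_setOf_eq, Set.mem_insert_iff, Set.mem_singleton_iff,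
    Quotient.eq]
  constructor
  · intro h
    rcases eqvGen_self A h with rfl | h'
    · exact Or.inl rfl
    · right; rw [h', A.invol]
  · rintro (rfl | rfl)
    · exact Relation.EqvGen.refl _
    · exact Relation.EqvGen.symm _ _ (Relation.EqvGen.rel _ _ (Or.inl rfl))

private lemma not_cycle_and_odd (A B : Genome G) (q : Quotient (agSetoid A B)) :
    ¬ (IsCycleComponent A B q ∧ IsOddPathComponent A B q) := by
  rintro ⟨hc, ho⟩
  obtain ⟨m, hm, hcm⟩ : ∃ m, 0 < m ∧ Nat.card (componentEdges A B q) = 2 * m := by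
    rcases hc with h | h
    exacts [altCycle_card h, altCycle_card h]
  obtain ⟨n, hn, ho'⟩ := ho
  have hno : Nat.card (componentEdges A B q) = n + 1 := by
    rcases ho' with h | h
    exacts [altPath_card h, altPath_card h]
  obtain ⟨k, rfl⟩ := hn
  omega

open Classical in
private noncomputable def wgt (A B : Genome G) (q : Quotient (agSetoid A B)) : ℕ :=
  (if IsCycleComponent A B q then 2 else 0) +
    (if IsOddPathComponent A B q then 1 else 0)

private lemma main_nat [Fintype G] (A B : Genome G) :
    2 * numCycles A B + numOddPaths A B ≤ 2 * Fintype.card G ∧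
    (2 * numCycles A B + numOddPaths A B = 2 * Fintype.card G ↔ A = B) := by
  classical
  haveI : Finite (Quotient (agSetoid A B)) := Quotient.finite _
  haveI : Fintype (Quotient (agSetoid A B)) := Fintype.ofFinite _
  have hsum : ∑ q : Quotient (agSetoid A B), Nat.card (componentEdges A B q)
      = 2 * Fintype.card G := by
    have h1 : ∀ q : Quotient (agSetoid A B), Nat.card (componentEdges A B q) =
        Fintype.card {x : Extremity G // Quotient.mk (agSetoid A B) x = q} := fun q => by
      rw [Nat.card_eq_fintype_card]
      exact Fintype.card_congr (Equiv.subtypeEquivRight fun x => Iff.rfl)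
    calc ∑ q : Quotient (agSetoid A B), Nat.card (componentEdges A B q)
        = ∑ q : Quotient (agSetoid A B),
            Fintype.card {x : Extremity G // Quotient.mk (agSetoid A B) x = q} :=
          Finset.sum_congr rfl fun q _ => h1 q
      _ = Fintype.card
            (Σ q : Quotient (agSetoid A B),
              {x : Extremity G // Quotient.mk (agSetoid A B) x = q}) :=
          Fintype.card_sigma.symm
      _ = Fintype.card (Extremity G) :=
          Fintype.card_congr (Equiv.sigmaFiberEquiv _)
      _ = 2 * Fintype.card G := by
          simp [Fintype.card_prod, mul_comm]
  have hwle : ∀ q : Quotient (agSetoid A B), wgt A B q ≤ Nat.card (componentEdges A B q) := by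
    intro q
    unfold wgt
    by_cases hcy : IsCycleComponent A B q
    · have hno : ¬ IsOddPathComponent A B q := fun h => not_cycle_and_odd A B q ⟨hcy, h⟩
      obtain ⟨m, hm, hcm⟩ : ∃ m, 0 < m ∧ Nat.card (componentEdges A B q) = 2 * m := by
        rcases hcy with h | h
        exacts [altCycle_card h, altCycle_card h]
      rw [if_pos hcy, if_neg hno]
      omega
    · by_cases hop : IsOddPathComponent A B q
      · obtain ⟨n, hn, ho'⟩ := hop
        have hno : Nat.card (componentEdges A B q) = n + 1 := by
          rcases ho' with h | h
          exacts [altPath_card h, altPath_card h]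
        rw [if_neg hcy, if_pos ⟨n, hn, ho'⟩]
        omega
      · rw [if_neg hcy, if_neg hop]
        omega
  have hwsum : ∑ q : Quotient (agSetoid A B), wgt A B q
      = 2 * numCycles A B + numOddPaths A B := by
    unfold wgt
    have e1 : numCycles A B =
        (Finset.univ.filter
          (fun q : Quotient (agSetoid A B) => IsCycleComponent A B q)).card := by
      rw [numCycles, Nat.card_eq_fintype_card, Fintype.card_subtype]
    have e2 : numOddPaths A B =
        (Finset.univ.filter
          (fun q : Quotient (agSetoid A B) => IsOddPathComponent A B q)).card := by
      rw [numOddPaths, Nat.card_eq_fintype_card, Fintype.card_subtype]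
    rw [Finset.sum_add_distrib]
    have e3 : ∀ q : Quotient (agSetoid A B),
        (if IsCycleComponent A B q then 2 else 0) =
          2 * (if IsCycleComponent A B q then 1 else 0) := by
      intro q; split <;> ring
    rw [Finset.sum_congr rfl fun q _ => e3 q, ← Finset.mul_sum,
      Finset.sum_boole, Finset.sum_boole]
    simp only [Nat.cast_id]
    rw [e1, e2]
  have hle : 2 * numCycles A B + numOddPaths A B ≤ 2 * Fintype.card G := by
    rw [← hwsum, ← hsum]
    exact Finset.sum_le_sum fun q _ => hwle q
  refine ⟨hle, ?_, ?_⟩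
  · -- equality → A = B
    intro heq
    have hsums : ∑ q : Quotient (agSetoid A B), wgt A B q
        = ∑ q : Quotient (agSetoid A B), Nat.card (componentEdges A B q) := by
      rw [hwsum, hsum, heq]
    have hptwise : ∀ q : Quotient (agSetoid A B),
        wgt A B q = Nat.card (componentEdges A B q) := by
      have := (Finset.sum_eq_sum_iff_of_le (fun q _ => hwle q)).mp hsums
      exact fun q => this q (Finset.mem_univ q)
    have hfx : ∀ x : Extremity G, A.f x = B.f x := by
      intro x
      have hx : x ∈ componentEdges A B (Quotient.mk (agSetoid A B) x) := rfl
      have hcpos : 0 < Nat.card (componentEdges A B (Quotient.mk (agSetoid A B) x)) := by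
        haveI : Nonempty (componentEdges A B (Quotient.mk (agSetoid A B) x)) := ⟨⟨x, hx⟩⟩
        exact Nat.card_pos
      have hwc := hptwise (Quotient.mk (agSetoid A B) x)
      unfold wgt at hwc
      by_cases hcy : IsCycleComponent A B (Quotient.mk (agSetoid A B) x)
      · have hno : ¬ IsOddPathComponent A B (Quotient.mk (agSetoid A B) x) :=
          fun h => not_cycle_and_odd A B _ ⟨hcy, h⟩
        rw [if_pos hcy, if_neg hno] at hwc
        have hc2 : Nat.card (componentEdges A B (Quotient.mk (agSetoid A B) x)) = 2 := by
          omega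
        rcases hcy with h | h
        · exact altCycle_card_two A.invol B.invol h hx hc2
        · exact (altCycle_card_two B.invol A.invol h hx hc2).symm
      · by_cases hop : IsOddPathComponent A B (Quotient.mk (agSetoid A B) x)
        · rw [if_neg hcy, if_pos hop] at hwc
          have hc1 : Nat.card (componentEdges A B (Quotient.mk (agSetoid A B) x)) = 1 := by
            omega
          obtain ⟨n, hn, h | h⟩ := hop
          · obtain ⟨h1, h2⟩ := altPath_card_one h hx hc1
            rw [h1, h2]
          · obtain ⟨h1, h2⟩ := altPath_card_one h hx hc1
            rw [h1, h2]
        · rw [if_neg hcy, if_neg hop] at hwc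
          omega
    have hf : A.f = B.f := funext hfx
    cases A; cases B
    simp only [Genome.mk.injEq]
    exact hf
  · -- A = B → equality
    rintro rfl
    have hptwise : ∀ q : Quotient (agSetoid A A),
        wgt A A q = Nat.card (componentEdges A A q) := by
      intro q
      obtain ⟨x, hx⟩ : ∃ x : Extremity G, Quotient.mk (agSetoid A A) x = q :=
        ⟨q.out, q.out_eq⟩
      subst hx
      have hce := componentEdges_self A x
      unfold wgt
      by_cases hfix : A.f x = x
      · have hce1 : componentEdges A A (Quotient.mk (agSetoid A A) x) = {x} := by
          rw [hce, hfix, Set.pair_eq_singleton]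
        have hop : IsOddPathComponent A A (Quotient.mk (agSetoid A A) x) :=
          ⟨0, Even.zero, Or.inl (by rw [hce1]; exact altPath_singleton hfix hfix)⟩
        have hcy : ¬ IsCycleComponent A A (Quotient.mk (agSetoid A A) x) :=
          fun h => not_cycle_and_odd A A _ ⟨h, hop⟩
        rw [if_neg hcy, if_pos hop, hce1, Nat.card_coe_set_eq, Set.ncard_singleton]
      · have hcy : IsCycleComponent A A (Quotient.mk (agSetoid A A) x) :=
          Or.inl (by rw [hce]; exact altCycle_pair hfix (A.invol x))
        have hop : ¬ IsOddPathComponent A A (Quotient.mk (agSetoid A A) x) :=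
          fun h => not_cycle_and_odd A A _ ⟨hcy, h⟩
        rw [if_pos hcy, if_neg hop, hce, Nat.card_coe_set_eq,
          Set.ncard_pair (fun h => hfix h.symm)]
    rw [← hwsum, ← hsum]
    exact Finset.sum_congr rfl fun q _ => hptwise q

end Aux

/-- For genomes `A`, `B` over the same finite set of `N` genes,
`C + I/2 ≤ N`, with equality iff `A = B`, where `C` is the number of cycles
and `I` the number of odd paths of the adjacency graph `AG(A,B)`. -/
theorem cycles_add_half_oddPaths_le_card {G : Type*} [Fintype G]
    (A B : Genome G) :
    (numCycles A B : ℚ) + (numOddPaths A B : ℚ) / 2 ≤ (Fintype.card G : ℚ) ∧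
    ((numCycles A B : ℚ) + (numOddPaths A B : ℚ) / 2 = (Fintype.card G : ℚ) ↔
      A = B) := by
  obtain ⟨hle, hiff⟩ := main_nat A B
  constructor
  · have : (2 * numCycles A B + numOddPaths A B : ℚ) ≤ (2 * Fintype.card G : ℚ) := by
      exact_mod_cast hle
    push_cast at this ⊢
    linarith
  · rw [← hiff]
    constructor
    · intro h
      have h2 : (2 * numCycles A B + numOddPaths A B : ℚ) = (2 * Fintype.card G : ℚ) := by
        linarith
      exact_mod_cast h2
    · intro h
      have h2 : (2 * numCycles A B + numOddPaths A B : ℚ) = (2 * Fintype.card G : ℚ) := by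
        exact_mod_cast h
      push_cast at h2
      linarith
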